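/- arXiv:1209.1123 — 2 statements merged into one kernel-verified Lean document; each statement's English description precedes it below -/
import Mathlib

section
/- (Affine closed-loop formula.) Let (M, N, M̃, Ñ, X, Y, X̃, Ỹ) be a DCF of the strictly proper plant G ∈ F^{m×p} over Ω, and let Q ∈ 𝔸^{p×m} be stable. Then I + G·K_Q is invertible over F and the four closed-loop transfer matrices are given by: (I+GK_Q)⁻¹ = Ỹ_Q·M̃, (I+GK_Q)⁻¹·G = Ỹ_Q·Ñ, K_Q·(I+GK_Q)⁻¹ = X̃_Q·M̃, and (I+K_Q·G)⁻¹ = I − X̃_Q·Ñ. Moreover Ỹ·M̃ = I − N·X, Ỹ·Ñ = N·Y, X̃·M̃ = M·X, and I − X̃·Ñ = M·Y, so each closed-loop block is an affine function of Q with stable coefficients. -/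
open Matrix

noncomputable section

/-- The field of real rational functions. -/
abbrev F : Type := RatFunc ℝ

/-- A rational function is stable (w.r.t. stability region `Ω`) if it is proper and
every complex root of the complexification of its reduced denominator lies in `Ω`. -/
def StableF (Ω : Set ℂ) (f : F) : Prop :=
  f.intDegree ≤ 0 ∧ ∀ z : ℂ, (f.denom.map (algebraMap ℝ ℂ)).IsRoot z → z ∈ Ω

/-- A matrix over `F` is stable if all its entries are stable. -/
def MatStable (Ω : Set ℂ) {a b : Type} (M : Matrix a b F) : Prop :=
  ∀ i j, StableF Ω (M i j)

/-- A matrix over `F` is strictly proper if every entry is `0` or has negative `intDegree`. -/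
def StrictlyProper {a b : Type} (G : Matrix a b F) : Prop :=
  ∀ i j, G i j = 0 ∨ (G i j).intDegree < 0

/-- A matrix over `F` is proper if every entry has nonpositive `intDegree`. -/
def ProperM {a b : Type} (K : Matrix a b F) : Prop :=
  ∀ i j, (K i j).intDegree ≤ 0

/-- `K` stabilizes `G` if `I + G*K` is invertible and the four closed-loop
transfer matrices are stable. -/
def Stabilizes (Ω : Set ℂ) {m p : ℕ} (G : Matrix (Fin m) (Fin p) F)
    (K : Matrix (Fin p) (Fin m) F) : Prop :=
  IsUnit (1 + G * K).det ∧
    MatStable Ω (1 + G * K)⁻¹ ∧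
    MatStable Ω ((1 + G * K)⁻¹ * G) ∧
    MatStable Ω (K * (1 + G * K)⁻¹) ∧
    MatStable Ω (1 + K * G)⁻¹

/-- A doubly coprime factorization of `G` over `Ω`. -/
structure IsDCF (Ω : Set ℂ) {m p : ℕ} (G : Matrix (Fin m) (Fin p) F)
    (M : Matrix (Fin p) (Fin p) F) (N : Matrix (Fin m) (Fin p) F)
    (Mt : Matrix (Fin m) (Fin m) F) (Nt : Matrix (Fin m) (Fin p) F)
    (X : Matrix (Fin p) (Fin m) F) (Y : Matrix (Fin p) (Fin p) F)
    (Xt : Matrix (Fin p) (Fin m) F) (Yt : Matrix (Fin m) (Fin m) F) : Prop where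
  stM : MatStable Ω M
  stN : MatStable Ω N
  stMt : MatStable Ω Mt
  stNt : MatStable Ω Nt
  stX : MatStable Ω X
  stY : MatStable Ω Y
  stXt : MatStable Ω Xt
  stYt : MatStable Ω Yt
  hM : IsUnit M.det
  hMt : IsUnit Mt.det
  hLeft : G = Mt⁻¹ * Nt
  hRight : G = N * M⁻¹
  bezout : Matrix.fromBlocks Y X (-Nt) Mt * Matrix.fromBlocks M (-Xt) N Yt = 1

/-- A left coprime factorization of `G` over `Ω`. -/
def IsLCF (Ω : Set ℂ) {m p : ℕ} (G : Matrix (Fin m) (Fin p) F)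
    (Mt : Matrix (Fin m) (Fin m) F) (Nt : Matrix (Fin m) (Fin p) F) : Prop :=
  MatStable Ω Mt ∧ MatStable Ω Nt ∧ IsUnit Mt.det ∧ G = Mt⁻¹ * Nt ∧
    ∃ Xt : Matrix (Fin p) (Fin m) F, ∃ Yt : Matrix (Fin m) (Fin m) F,
      MatStable Ω Xt ∧ MatStable Ω Yt ∧ Nt * Xt + Mt * Yt = 1

/-- A right coprime factorization of `G` over `Ω`. -/
def IsRCF (Ω : Set ℂ) {m p : ℕ} (G : Matrix (Fin m) (Fin p) F)
    (N : Matrix (Fin m) (Fin p) F) (M : Matrix (Fin p) (Fin p) F) : Prop :=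
  MatStable Ω N ∧ MatStable Ω M ∧ IsUnit M.det ∧ G = N * M⁻¹ ∧
    ∃ X : Matrix (Fin p) (Fin m) F, ∃ Y : Matrix (Fin p) (Fin p) F,
      MatStable Ω X ∧ MatStable Ω Y ∧ Y * M + X * N = 1

/-- Evaluation of a rational function at a complex point (complexified num/denom). -/
def evalC (z : ℂ) (f : F) : ℂ :=
  (f.num.map (algebraMap ℝ ℂ)).eval z / (f.denom.map (algebraMap ℝ ℂ)).eval z


set_option maxHeartbeats 1000000

section AuxACL
open Filter Polynomial


-- properness closure
lemma prop_add {f g : F} (hf : f.intDegree ≤ 0) (hg : g.intDegree ≤ 0) :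
    (f + g).intDegree ≤ 0 := by
  by_cases hfg : f + g = 0
  · simp [hfg]
  by_cases hg0 : g = 0
  · simpa [hg0] using hf
  exact (RatFunc.intDegree_add_le hg0 hfg).trans (max_le hf hg)

lemma prop_mul {f g : F} (hf : f.intDegree ≤ 0) (hg : g.intDegree ≤ 0) :
    (f * g).intDegree ≤ 0 := by
  by_cases hf0 : f = 0
  · simp [hf0]
  by_cases hg0 : g = 0
  · simp [hg0]
  rw [RatFunc.intDegree_mul hf0 hg0]
  omega

lemma sp_add {f g : F} (hf : f = 0 ∨ f.intDegree < 0) (hg : g = 0 ∨ g.intDegree < 0) :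
    f + g = 0 ∨ (f + g).intDegree < 0 := by
  by_cases hfg : f + g = 0
  · exact Or.inl hfg
  right
  rcases hf with hf | hf
  · rcases hg with hg | hg
    · simp [hf, hg] at hfg
    · simpa [hf] using hg
  rcases hg with hg | hg
  · simpa [hg] using hf
  by_cases hg0 : g = 0
  · simpa [hg0] using hf
  exact lt_of_le_of_lt (RatFunc.intDegree_add_le hg0 hfg) (max_lt hf hg)

lemma sp_mul {f g : F} (hf : f = 0 ∨ f.intDegree < 0) (hg : g.intDegree ≤ 0) :
    f * g = 0 ∨ (f * g).intDegree < 0 := by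
  by_cases hf0 : f = 0
  · simp [hf0]
  by_cases hg0 : g = 0
  · simp [hg0]
  right
  rcases hf with hf | hf
  · exact absurd hf hf0
  rw [RatFunc.intDegree_mul hf0 hg0]
  omega


/-- evaluation point function -/
def ev (x : ℝ) (f : F) : ℝ := RatFunc.eval (RingHom.id ℝ) x f

lemma eval₂_id (p : Polynomial ℝ) (x : ℝ) : p.eval₂ (RingHom.id ℝ) x = p.eval x := by
  simpa using Polynomial.eval₂_at_apply (p := p) (RingHom.id ℝ) x

lemma ev_eq (x : ℝ) (f : F) : ev x f = f.num.eval x / f.denom.eval x := by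
  rw [ev, RatFunc.eval, eval₂_id, eval₂_id]

/-- the subring of rational functions whose denominator does not vanish at x -/
def okAt (x : ℝ) : Subring F where
  carrier := {f | f.denom.eval x ≠ 0}
  one_mem' := by simp [RatFunc.denom_one]
  zero_mem' := by simp [RatFunc.denom_zero]
  add_mem' := by
    intro a b ha hb
    obtain ⟨c, hc⟩ := RatFunc.denom_add_dvd a b
    intro h
    apply mul_ne_zero ha hb
    have h2 : a.denom.eval x * b.denom.eval x = 0 := by
      rw [← Polynomial.eval_mul, hc, Polynomial.eval_mul, h, zero_mul]
    exact h2
  mul_mem' := by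
    intro a b ha hb
    obtain ⟨c, hc⟩ := RatFunc.denom_mul_dvd a b
    intro h
    apply mul_ne_zero ha hb
    have h2 : a.denom.eval x * b.denom.eval x = 0 := by
      rw [← Polynomial.eval_mul, hc, Polynomial.eval_mul, h, zero_mul]
    exact h2
  neg_mem' := by
    intro a ha
    have : -a = RatFunc.C (-1) * a := by
      rw [_root_.map_neg, _root_.map_one]; ring
    rw [this]
    obtain ⟨c, hc⟩ := RatFunc.denom_mul_dvd (RatFunc.C (-1)) a
    rw [RatFunc.denom_C, one_mul] at hc
    intro h
    apply ha
    rw [hc, Polynomial.eval_mul, h, zero_mul]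

lemma mem_okAt {x : ℝ} {f : F} : f ∈ okAt x ↔ f.denom.eval x ≠ 0 := Iff.rfl

/-- evaluation as a ring hom on okAt x -/
def evRH (x : ℝ) : okAt x →+* ℝ where
  toFun f := ev x f.1
  map_one' := by simp [ev, RatFunc.eval_one]
  map_zero' := by simp [ev, RatFunc.eval_zero]
  map_add' a b := by
    apply RatFunc.eval_add <;> rw [eval₂_id]
    exacts [a.2, b.2]
  map_mul' a b := by
    apply RatFunc.eval_mul <;> rw [eval₂_id]
    exacts [a.2, b.2]

lemma tendsto_ev_of_proper {f : F} (hf : f.intDegree ≤ 0) :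
    ∃ L, Filter.Tendsto (fun x => ev x f) atTop (nhds L) := by
  by_cases h0 : f = 0
  · refine ⟨0, ?_⟩
    simp only [ev_eq, h0, RatFunc.num_zero, Polynomial.eval_zero, zero_div]
    exact tendsto_const_nhds
  have hnum : f.num ≠ 0 := RatFunc.num_ne_zero h0
  have hle : f.num.natDegree ≤ f.denom.natDegree := by
    rw [RatFunc.intDegree] at hf; omega
  rcases lt_or_eq_of_le hle with hlt | heq
  · refine ⟨0, ?_⟩
    have := Polynomial.div_tendsto_zero_of_degree_lt f.num f.denom
      (Polynomial.degree_lt_degree hlt)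
    simpa [ev_eq] using this
  · refine ⟨f.num.leadingCoeff / f.denom.leadingCoeff, ?_⟩
    have hdeg : f.num.degree = f.denom.degree := by
      rw [Polynomial.degree_eq_natDegree hnum,
        Polynomial.degree_eq_natDegree f.denom_ne_zero, heq]
    have := Polynomial.div_tendsto_leadingCoeff_div_of_degree_eq f.num f.denom hdeg
    simpa [ev_eq] using this

lemma tendsto_ev_of_strict {f : F} (hf : f = 0 ∨ f.intDegree < 0) :
    Filter.Tendsto (fun x => ev x f) atTop (nhds 0) := by
  rcases hf with h0 | hf
  · simp only [ev_eq, h0, RatFunc.num_zero, Polynomial.eval_zero, zero_div]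
    exact tendsto_const_nhds
  by_cases h0 : f = 0
  · simp only [ev_eq, h0, RatFunc.num_zero, Polynomial.eval_zero, zero_div]
    exact tendsto_const_nhds
  have hnum : f.num ≠ 0 := RatFunc.num_ne_zero h0
  have hlt : f.num.natDegree < f.denom.natDegree := by
    rw [RatFunc.intDegree] at hf; omega
  have := Polynomial.div_tendsto_zero_of_degree_lt f.num f.denom
    (Polynomial.degree_lt_degree hlt)
  simpa [ev_eq] using this

/-- a nonzero polynomial is eventually nonvanishing -/
lemma eventually_ne_zero {q : Polynomial ℝ} (hq : q ≠ 0) :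
    ∀ᶠ x in atTop, q.eval x ≠ 0 := by
  have hfin := Polynomial.finite_setOf_isRoot hq
  obtain ⟨b, hb⟩ := hfin.bddAbove
  filter_upwards [eventually_gt_atTop b] with x hx hroot
  exact absurd (hb hroot) (not_le.mpr hx)
lemma evRH_apply (x : ℝ) (f : okAt x) : evRH x f = ev x f.1 := rfl

def evM (x : ℝ) {a b : Type} (A : Matrix a b F) : Matrix a b ℝ :=
  Matrix.of fun i j => ev x (A i j)

lemma tendsto_matmul {a b c : Type} [Fintype b] {l : Filter ℝ}
    {f : ℝ → Matrix a b ℝ} {g : ℝ → Matrix b c ℝ} {A : Matrix a b ℝ} {B : Matrix b c ℝ}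
    (hf : Filter.Tendsto f l (nhds A)) (hg : Filter.Tendsto g l (nhds B)) :
    Filter.Tendsto (fun x => f x * g x) l (nhds (A * B)) := by
  refine tendsto_pi_nhds.mpr ?_
  intro i
  refine tendsto_pi_nhds.mpr ?_
  intro j
  have hfij : ∀ i' j', Filter.Tendsto (fun x => f x i' j') l (nhds (A i' j')) := by
    intro i' j'
    exact (tendsto_pi_nhds.mp (tendsto_pi_nhds.mp hf i') j')
  have hgij : ∀ i' j', Filter.Tendsto (fun x => g x i' j') l (nhds (B i' j')) := by
    intro i' j'
    exact (tendsto_pi_nhds.mp (tendsto_pi_nhds.mp hg i') j')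
  simp only [Matrix.mul_apply]
  exact tendsto_finset_sum _ fun k _ => (hfij i k).mul (hgij k j)

lemma tendsto_matadd {a b : Type} {l : Filter ℝ}
    {f g : ℝ → Matrix a b ℝ} {A B : Matrix a b ℝ}
    (hf : Filter.Tendsto f l (nhds A)) (hg : Filter.Tendsto g l (nhds B)) :
    Filter.Tendsto (fun x => f x + g x) l (nhds (A + B)) := by
  refine tendsto_pi_nhds.mpr ?_
  intro i
  refine tendsto_pi_nhds.mpr ?_
  intro j
  exact ((tendsto_pi_nhds.mp (tendsto_pi_nhds.mp hf i) j).add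
    (tendsto_pi_nhds.mp (tendsto_pi_nhds.mp hg i) j))

lemma tendsto_matdet {a : Type} [Fintype a] [DecidableEq a] {l : Filter ℝ}
    {f : ℝ → Matrix a a ℝ} {A : Matrix a a ℝ}
    (hf : Filter.Tendsto f l (nhds A)) :
    Filter.Tendsto (fun x => (f x).det) l (nhds A.det) := by
  simp only [Matrix.det_apply]
  refine tendsto_finset_sum _ fun σ _ => Filter.Tendsto.const_smul ?_ _
  exact tendsto_finset_prod _ fun i _ => tendsto_pi_nhds.mp (tendsto_pi_nhds.mp hf _) _

lemma eventually_mem_okAt {a b : Type} [Finite a] [Finite b] (A : Matrix a b F) :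
    ∀ᶠ x in atTop, ∀ i j, A i j ∈ okAt x := by
  rw [eventually_all]; intro i
  rw [eventually_all]; intro j
  filter_upwards [eventually_ne_zero (RatFunc.denom_ne_zero (A i j))] with x hx
  exact mem_okAt.mpr hx

lemma key_isUnit {p m : ℕ}
    (A B : Matrix (Fin p) (Fin p) F) (C : Matrix (Fin p) (Fin m) F)
    (Nn : Matrix (Fin m) (Fin p) F)
    (hA : ∀ i j, (A i j).intDegree ≤ 0) (hB : ∀ i j, (B i j).intDegree ≤ 0)
    (hC : ∀ i j, (C i j).intDegree ≤ 0)
    (hN : ∀ i j, Nn i j = 0 ∨ (Nn i j).intDegree < 0)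
    (h : A * B + C * Nn = 1) : IsUnit A.det := by
  rw [isUnit_iff_ne_zero]
  intro hdet
  have hev : ∀ᶠ x in atTop,
      evM x A * evM x B + evM x C * evM x Nn = 1 ∧ (evM x A).det = 0 := by
    filter_upwards [eventually_mem_okAt A, eventually_mem_okAt B,
      eventually_mem_okAt C, eventually_mem_okAt Nn] with x hxA hxB hxC hxN
    set σ : okAt x →+* F := (okAt x).subtype with hσ
    set e : okAt x →+* ℝ := evRH x with he
    set A' : Matrix (Fin p) (Fin p) (okAt x) := Matrix.of fun i j => ⟨A i j, hxA i j⟩ with hA'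
    set B' : Matrix (Fin p) (Fin p) (okAt x) := Matrix.of fun i j => ⟨B i j, hxB i j⟩ with hB'
    set C' : Matrix (Fin p) (Fin m) (okAt x) := Matrix.of fun i j => ⟨C i j, hxC i j⟩ with hC'
    set N' : Matrix (Fin m) (Fin p) (okAt x) := Matrix.of fun i j => ⟨Nn i j, hxN i j⟩ with hN'
    have hinj : Function.Injective
        (fun (M : Matrix (Fin p) (Fin p) (okAt x)) => M.map σ) := by
      intro M1 M2 h12
      ext i j
      exact congrFun (congrFun h12 i) j
    have hsub : A' * B' + C' * N' = 1 := by
      apply hinj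
      show (A' * B' + C' * N').map σ = (1 : Matrix (Fin p) (Fin p) (okAt x)).map σ
      rw [Matrix.map_add σ (fun a b => map_add σ a b), Matrix.map_mul, Matrix.map_mul,
        Matrix.map_one σ (map_zero σ) (map_one σ)]
      have eA : A'.map σ = A := by ext i j; rfl
      have eB : B'.map σ = B := by ext i j; rfl
      have eC : C'.map σ = C := by ext i j; rfl
      have eN : N'.map σ = Nn := by ext i j; rfl
      rw [eA, eB, eC, eN, h]
    have hsubdet : A'.det = 0 := by
      have h1 : σ A'.det = 0 := by
        rw [RingHom.map_det]
        have eA : σ.mapMatrix A' = A := by ext i j; rfl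
        rw [eA, hdet]
      exact Subtype.ext_iff.mpr h1
    refine ⟨?_, ?_⟩
    · have h2 : (A' * B' + C' * N').map e = (1 : Matrix (Fin p) (Fin p) (okAt x)).map e := by
        rw [hsub]
      rw [Matrix.map_add e (fun a b => map_add e a b), Matrix.map_mul, Matrix.map_mul,
        Matrix.map_one e (map_zero e) (map_one e)] at h2
      have eA : A'.map e = evM x A := by ext i j; exact evRH_apply x _
      have eB : B'.map e = evM x B := by ext i j; exact evRH_apply x _
      have eC : C'.map e = evM x C := by ext i j; exact evRH_apply x _
      have eN : N'.map e = evM x Nn := by ext i j; exact evRH_apply x _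
      rwa [eA, eB, eC, eN] at h2
    · have h1 : e A'.det = (e.mapMatrix A').det := RingHom.map_det e A'
      rw [hsubdet, map_zero] at h1
      have eA : e.mapMatrix A' = evM x A := by ext i j; exact evRH_apply x _
      rw [eA] at h1
      exact h1.symm
  -- limits
  set LA : Matrix (Fin p) (Fin p) ℝ :=
    Matrix.of fun i j => (tendsto_ev_of_proper (hA i j)).choose with hLAdef
  set LB : Matrix (Fin p) (Fin p) ℝ :=
    Matrix.of fun i j => (tendsto_ev_of_proper (hB i j)).choose with hLBdef
  set LC : Matrix (Fin p) (Fin m) ℝ :=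
    Matrix.of fun i j => (tendsto_ev_of_proper (hC i j)).choose with hLCdef
  have hLA : Tendsto (fun x => evM x A) atTop (nhds LA) :=
    tendsto_pi_nhds.mpr fun i => tendsto_pi_nhds.mpr fun j =>
      (tendsto_ev_of_proper (hA i j)).choose_spec
  have hLB : Tendsto (fun x => evM x B) atTop (nhds LB) :=
    tendsto_pi_nhds.mpr fun i => tendsto_pi_nhds.mpr fun j =>
      (tendsto_ev_of_proper (hB i j)).choose_spec
  have hLC : Tendsto (fun x => evM x C) atTop (nhds LC) :=
    tendsto_pi_nhds.mpr fun i => tendsto_pi_nhds.mpr fun j =>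
      (tendsto_ev_of_proper (hC i j)).choose_spec
  have hLN : Tendsto (fun x => evM x Nn) atTop (nhds (0 : Matrix (Fin m) (Fin p) ℝ)) :=
    tendsto_pi_nhds.mpr fun i => tendsto_pi_nhds.mpr fun j => tendsto_ev_of_strict (hN i j)
  have hcomb : Tendsto (fun x => evM x A * evM x B + evM x C * evM x Nn) atTop
      (nhds (LA * LB + LC * (0 : Matrix (Fin m) (Fin p) ℝ))) := by
    exact tendsto_matadd (tendsto_matmul hLA hLB) (tendsto_matmul hLC hLN)
  have hone : LA * LB + LC * (0 : Matrix (Fin m) (Fin p) ℝ) = 1 := by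
    refine tendsto_nhds_unique hcomb ?_
    refine Tendsto.congr' ?_ (tendsto_const_nhds : Tendsto (fun _ : ℝ => (1 : Matrix (Fin p) (Fin p) ℝ)) atTop (nhds 1))
    filter_upwards [hev] with x hx
    exact hx.1.symm
  rw [Matrix.mul_zero, add_zero] at hone
  have hdetLA : LA.det = 0 := by
    have hd : Tendsto (fun x => (evM x A).det) atTop (nhds LA.det) := tendsto_matdet hLA
    refine tendsto_nhds_unique hd ?_
    refine Tendsto.congr' ?_ (tendsto_const_nhds : Tendsto (fun _ : ℝ => (0 : ℝ)) atTop (nhds 0))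
    filter_upwards [hev] with x hx
    exact hx.2 ▸ (by simp)
  have : LA.det * LB.det = 1 := by rw [← Matrix.det_mul, hone, Matrix.det_one]
  rw [hdetLA, zero_mul] at this
  exact zero_ne_one this
-- matrix-level properness lemmas
lemma prop_matmul {a b c : Type} [Fintype b] {A : Matrix a b F} {B : Matrix b c F}
    (hA : ∀ i j, (A i j).intDegree ≤ 0) (hB : ∀ i j, (B i j).intDegree ≤ 0) :
    ∀ i j, ((A * B) i j).intDegree ≤ 0 := by
  intro i j
  rw [Matrix.mul_apply]
  refine Finset.sum_induction _ (fun g : F => g.intDegree ≤ 0) (fun a b ha hb => prop_add ha hb)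
    (by simp [RatFunc.intDegree_zero]) ?_
  intro k _
  exact prop_mul (hA i k) (hB k j)

lemma prop_matsub {a b : Type} {A B : Matrix a b F}
    (hA : ∀ i j, (A i j).intDegree ≤ 0) (hB : ∀ i j, (B i j).intDegree ≤ 0) :
    ∀ i j, ((A - B) i j).intDegree ≤ 0 := by
  intro i j
  rw [Matrix.sub_apply, sub_eq_add_neg]
  exact prop_add (hA i j) (by rw [RatFunc.intDegree_neg]; exact hB i j)

lemma prop_matadd {a b : Type} {A B : Matrix a b F}
    (hA : ∀ i j, (A i j).intDegree ≤ 0) (hB : ∀ i j, (B i j).intDegree ≤ 0) :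
    ∀ i j, ((A + B) i j).intDegree ≤ 0 := by
  intro i j
  rw [Matrix.add_apply]
  exact prop_add (hA i j) (hB i j)

lemma sp_matmul {a b c : Type} [Fintype b] {A : Matrix a b F} {B : Matrix b c F}
    (hA : ∀ i j, A i j = 0 ∨ (A i j).intDegree < 0) (hB : ∀ i j, (B i j).intDegree ≤ 0) :
    ∀ i j, (A * B) i j = 0 ∨ ((A * B) i j).intDegree < 0 := by
  intro i j
  rw [Matrix.mul_apply]
  refine Finset.sum_induction _ (fun g : F => g = 0 ∨ g.intDegree < 0)
    (fun a b ha hb => sp_add ha hb) (Or.inl rfl) ?_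
  intro k _
  exact sp_mul (hA i k) (hB k j)


end AuxACL

/-- **Affine closed-loop formula.** For a DCF of the strictly proper plant `G` and stable `Q`,
the four closed-loop transfer matrices of `K_Q` are affine in `Q`:
`(I+GK_Q)⁻¹ = Ỹ_Q M̃`, `(I+GK_Q)⁻¹G = Ỹ_Q Ñ`, `K_Q(I+GK_Q)⁻¹ = X̃_Q M̃`,
`(I+K_Q G)⁻¹ = I − X̃_Q Ñ`, together with `Ỹ M̃ = I − N X`, `Ỹ Ñ = N Y`,
`X̃ M̃ = M X`, `I − X̃ Ñ = M Y`. -/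
theorem affine_closed_loop (Ω : Set ℂ) (m p : ℕ)
    (G : Matrix (Fin m) (Fin p) F) (hG : StrictlyProper G)
    (M : Matrix (Fin p) (Fin p) F) (N : Matrix (Fin m) (Fin p) F)
    (Mt : Matrix (Fin m) (Fin m) F) (Nt : Matrix (Fin m) (Fin p) F)
    (X : Matrix (Fin p) (Fin m) F) (Y : Matrix (Fin p) (Fin p) F)
    (Xt : Matrix (Fin p) (Fin m) F) (Yt : Matrix (Fin m) (Fin m) F)
    (hDCF : IsDCF Ω G M N Mt Nt X Y Xt Yt)
    (Q : Matrix (Fin p) (Fin m) F) (hQ : MatStable Ω Q) :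
    IsUnit (1 + G * ((Y - Q * Nt)⁻¹ * (X + Q * Mt))).det ∧
    (1 + G * ((Y - Q * Nt)⁻¹ * (X + Q * Mt)))⁻¹ = (Yt - N * Q) * Mt ∧
    (1 + G * ((Y - Q * Nt)⁻¹ * (X + Q * Mt)))⁻¹ * G = (Yt - N * Q) * Nt ∧
    ((Y - Q * Nt)⁻¹ * (X + Q * Mt)) *
        (1 + G * ((Y - Q * Nt)⁻¹ * (X + Q * Mt)))⁻¹ = (Xt + M * Q) * Mt ∧
    (1 + ((Y - Q * Nt)⁻¹ * (X + Q * Mt)) * G)⁻¹ = 1 - (Xt + M * Q) * Nt ∧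
    Yt * Mt = 1 - N * X ∧ Yt * Nt = N * Y ∧ Xt * Mt = M * X ∧ 1 - Xt * Nt = M * Y := by
  obtain ⟨stM, stN, stMt, stNt, stX, stY, stXt, stYt, hM, hMt, hLeft, hRight, bez⟩ := hDCF
  -- B*A = 1
  have hBA : fromBlocks M (-Xt) N Yt * fromBlocks Y X (-Nt) Mt = 1 :=
    mul_eq_one_comm.mp bez
  rw [fromBlocks_multiply, ← fromBlocks_one] at hBA
  obtain ⟨c11, c12, c21, c22⟩ := fromBlocks_inj.mp hBA
  rw [Matrix.neg_mul, Matrix.mul_neg, neg_neg] at c11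
  rw [Matrix.neg_mul] at c12
  rw [Matrix.mul_neg] at c21
  -- c11 : M * Y + Xt * Nt = 1 ; c12 : M * X + -(Xt * Mt) = 0
  -- c21 : N * Y + -(Yt * Nt) = 0 ; c22 : N * X + Yt * Mt = 1
  have j2 : M * X = Xt * Mt := by
    have := c12; rw [add_neg_eq_zero] at this; exact this
  have j3 : N * Y = Yt * Nt := by
    have := c21; rw [add_neg_eq_zero] at this; exact this
  -- shifted Bezout
  set Yq := Y - Q * Nt with hYq
  set Xq := X + Q * Mt with hXq
  set Xtq := Xt + M * Q with hXtq
  set Ytq := Yt - N * Q with hYtq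
  have hU : fromBlocks Yq Xq (-Nt) Mt
      = fromBlocks 1 Q 0 1 * fromBlocks Y X (-Nt) Mt := by
    rw [fromBlocks_multiply]
    refine fromBlocks_inj.mpr ⟨?_, ?_, ?_, ?_⟩ <;>
      simp [hYq, hXq, Matrix.mul_neg, sub_eq_add_neg]
  have hV : fromBlocks M (-Xtq) N Ytq
      = fromBlocks M (-Xt) N Yt * fromBlocks 1 (-Q) 0 1 := by
    rw [fromBlocks_multiply]
    refine fromBlocks_inj.mpr ⟨?_, ?_, ?_, ?_⟩ <;>
      simp [hXtq, hYtq, Matrix.mul_neg, sub_eq_add_neg, neg_add, add_comm]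
  have hUV : (fromBlocks 1 Q 0 1 : Matrix (Fin p ⊕ Fin m) (Fin p ⊕ Fin m) F)
      * fromBlocks 1 (-Q) 0 1 = 1 := by
    rw [fromBlocks_multiply, ← fromBlocks_one]
    refine fromBlocks_inj.mpr ⟨?_, ?_, ?_, ?_⟩ <;> simp
  have hAqBq : fromBlocks Yq Xq (-Nt) Mt * fromBlocks M (-Xtq) N Ytq = 1 := by
    rw [hU, hV, Matrix.mul_assoc, ← Matrix.mul_assoc (fromBlocks Y X (-Nt) Mt), bez,
      Matrix.one_mul, hUV]
  have hBqAq : fromBlocks M (-Xtq) N Ytq * fromBlocks Yq Xq (-Nt) Mt = 1 :=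
    mul_eq_one_comm.mp hAqBq
  rw [fromBlocks_multiply, ← fromBlocks_one] at hAqBq hBqAq
  obtain ⟨a11, a12, a21, a22⟩ := fromBlocks_inj.mp hAqBq
  obtain ⟨d11, d12, d21, d22⟩ := fromBlocks_inj.mp hBqAq
  rw [Matrix.mul_neg] at a12
  rw [Matrix.neg_mul, Matrix.mul_neg, neg_neg] at d11
  rw [Matrix.neg_mul] at d12
  rw [Matrix.mul_neg] at d21
  -- a11 : Yq * M + Xq * N = 1
  -- a12 : -(Yq * Xtq) + Xq * Ytq = 0
  -- d11 : M * Yq + Xtq * Nt = 1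
  -- d12 : M * Xq + -(Xtq * Mt) = 0
  -- d21 : N * Yq + -(Ytq * Nt) = 0
  -- d22 : N * Xq + Ytq * Mt = 1
  have q2 : Xq * Ytq = Yq * Xtq := by
    have := a12; rw [neg_add_eq_zero] at this; exact this.symm
  have q4 : M * Xq = Xtq * Mt := by
    have := d12; rw [add_neg_eq_zero] at this; exact this
  have q5 : N * Yq = Ytq * Nt := by
    have := d21; rw [add_neg_eq_zero] at this; exact this
  -- factorization facts
  have hN : N = G * M := by
    rw [hRight, Matrix.mul_assoc, Matrix.nonsing_inv_mul M hM, Matrix.mul_one]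
  have hNt : Nt = Mt * G := by
    rw [hLeft, ← Matrix.mul_assoc, Matrix.mul_nonsing_inv Mt hMt, Matrix.one_mul]
  -- properness
  have pYq : ∀ i j, (Yq i j).intDegree ≤ 0 :=
    prop_matsub (fun i j => (stY i j).1)
      (prop_matmul (fun i j => (hQ i j).1) (fun i j => (stNt i j).1))
  have pXq : ∀ i j, (Xq i j).intDegree ≤ 0 :=
    prop_matadd (fun i j => (stX i j).1)
      (prop_matmul (fun i j => (hQ i j).1) (fun i j => (stMt i j).1))
  have pM : ∀ i j, (M i j).intDegree ≤ 0 := fun i j => (stM i j).1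
  have spN : ∀ i j, N i j = 0 ∨ (N i j).intDegree < 0 := by
    rw [hN]; exact sp_matmul hG pM
  have hYqdet : IsUnit Yq.det := key_isUnit Yq M Xq N pYq pM pXq spN a11
  -- the controller
  set K := Yq⁻¹ * Xq with hK
  have hYqK : Yq * K = Xq := by
    rw [hK, ← Matrix.mul_assoc, Matrix.mul_nonsing_inv Yq hYqdet, Matrix.one_mul]
  -- left inverse of 1 + G * K
  have hL : (Ytq * Mt) * (1 + G * K) = 1 := by
    have : (Ytq * Mt) * (1 + G * K) = Ytq * Mt + Ytq * (Mt * G) * K := by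
      rw [Matrix.mul_add, Matrix.mul_one]
      simp only [Matrix.mul_assoc]
    rw [this, ← hNt, ← q5, Matrix.mul_assoc N Yq K, hYqK, ← d22, add_comm]
  have hdet1 : IsUnit (1 + G * K).det := by
    have h1 : (Ytq * Mt).det * (1 + G * K).det = 1 := by
      rw [← Matrix.det_mul, hL, Matrix.det_one]
    exact IsUnit.of_mul_eq_one _ (by rw [mul_comm]; exact h1)
  have inv1 : (1 + G * K)⁻¹ = Ytq * Mt := Matrix.inv_eq_left_inv hL
  have inv2 : (1 + G * K)⁻¹ * G = Ytq * Nt := by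
    rw [inv1, hNt, Matrix.mul_assoc]
  have inv3 : K * (1 + G * K)⁻¹ = Xtq * Mt := by
    rw [inv1, hK, Matrix.mul_assoc Yq⁻¹ Xq (Ytq * Mt), ← Matrix.mul_assoc Xq Ytq Mt, q2,
      Matrix.mul_assoc Yq Xtq Mt, ← Matrix.mul_assoc Yq⁻¹ Yq (Xtq * Mt),
      Matrix.nonsing_inv_mul Yq hYqdet, Matrix.one_mul]
  have inv4 : (1 + K * G)⁻¹ = 1 - Xtq * Nt := by
    have hL2 : (M * Yq) * (1 + K * G) = 1 := by
      have e1 : (M * Yq) * (1 + K * G) = M * Yq + M * (Yq * K) * G := by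
        rw [Matrix.mul_add, Matrix.mul_one]
        simp only [Matrix.mul_assoc]
      rw [e1, hYqK, q4, Matrix.mul_assoc Xtq Mt G, ← hNt, d11]
    have : (1 + K * G)⁻¹ = M * Yq := Matrix.inv_eq_left_inv hL2
    rw [this, ← d11]; abel
  refine ⟨hdet1, inv1, inv2, inv3, inv4, ?_, ?_, ?_, ?_⟩
  · rw [← c22]; abel
  · exact j3.symm
  · exact j2.symm
  · rw [← c11]; abel
end
end

section
/- (Corollary 2: block-decoupled version of the main result.) Let (M, N, M̃, Ñ, X, Y, X̃, Ỹ) be an input/output decoupled DCF of the strictly proper plant G ∈ F^{m×p} over Ω, and let the block sparsity subspace S defined by K^bin : Fin ru → Fin ry → Bool be QI under G. (Sufficiency) If Q ∈ 𝔸^{p×m} is stable and satisfies wp(X̃_Q) ≤ K^bin or wp(X_Q) ≤ K^bin, then K_Q ∈ S and K_Q stabilizes G. (Necessity) If K ∈ S stabilizes G, then there exists a stable Q ∈ 𝔸^{p×m} with K = K_Q, wp(X̃_Q) ≤ K^bin, and wp(X_Q) ≤ K^bin. -/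
open Matrix

noncomputable section

set_option synthInstance.maxHeartbeats 1000000
set_option maxHeartbeats 4000000

instance : CharZero F := charZero_of_injective_algebraMap (algebraMap ℝ F).injective

def Pr (f : F) : Prop := f.intDegree ≤ 0
def Sp (f : F) : Prop := f = 0 ∨ f.intDegree < 0

lemma Sp.pr {f : F} (h : Sp f) : Pr f := by
  rcases h with h | h
  · simp [Pr, h, RatFunc.intDegree_zero]
  · exact le_of_lt h

lemma Pr.add {f g : F} (hf : Pr f) (hg : Pr g) : Pr (f + g) := by
  unfold Pr at *
  rcases eq_or_ne (f + g) 0 with h | h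
  · simp [h, RatFunc.intDegree_zero]
  rcases eq_or_ne g 0 with hg0 | hg0
  · simpa [hg0] using hf
  calc (f+g).intDegree ≤ max f.intDegree g.intDegree := RatFunc.intDegree_add_le hg0 h
    _ ≤ 0 := max_le hf hg

lemma Pr.mul {f g : F} (hf : Pr f) (hg : Pr g) : Pr (f * g) := by
  unfold Pr at *
  rcases eq_or_ne f 0 with h | h; · simp [h, RatFunc.intDegree_zero]
  rcases eq_or_ne g 0 with h' | h'; · simp [h', RatFunc.intDegree_zero]
  rw [RatFunc.intDegree_mul h h']
  omega

lemma Sp.add {f g : F} (hf : Sp f) (hg : Sp g) : Sp (f + g) := by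
  rcases hf with rfl | hf; · simpa using hg
  rcases hg with rfl | hg; · simpa [Sp] using Or.inr hf
  rcases eq_or_ne (f + g) 0 with h | h; · exact Or.inl h
  right
  have hg0 : g ≠ 0 := by intro h0; rw [h0, RatFunc.intDegree_zero] at hg; omega
  calc (f+g).intDegree ≤ max f.intDegree g.intDegree := RatFunc.intDegree_add_le hg0 h
    _ < 0 := max_lt hf hg

lemma Sp.mul_pr {f g : F} (hf : Sp f) (hg : Pr g) : Sp (f * g) := by
  rcases hf with rfl | hf; · simp [Sp]
  rcases eq_or_ne g 0 with rfl | hg0; · simp [Sp]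
  have hf0 : f ≠ 0 := by intro h0; rw [h0, RatFunc.intDegree_zero] at hf; omega
  right; rw [RatFunc.intDegree_mul hf0 hg0]; unfold Pr at hg; omega

lemma Pr.mul_sp {f g : F} (hf : Pr f) (hg : Sp g) : Sp (f * g) := by
  rw [mul_comm]; exact hg.mul_pr hf

lemma Sp.sum {s : Finset (Fin n)} {f : Fin n → F} (h : ∀ i ∈ s, Sp (f i)) :
    Sp (∑ i ∈ s, f i) := by
  classical
  induction s using Finset.induction_on with
  | empty => simp [Sp]
  | insert _ _ hx ih =>
    rw [Finset.sum_insert hx]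
    exact (h _ (Finset.mem_insert_self _ _)).add
      (ih fun i hi => h i (Finset.mem_insert_of_mem hi))

lemma stable_of_denom_dvd {Ω : Set ℂ} {f g h : F} (hf : StableF Ω f) (hg : StableF Ω g)
    (hd : h.denom ∣ f.denom * g.denom) (hdeg : h.intDegree ≤ 0) : StableF Ω h := by
  refine ⟨hdeg, fun z hz => ?_⟩
  have hdvd : h.denom.map (algebraMap ℝ ℂ) ∣
      (f.denom.map (algebraMap ℝ ℂ)) * (g.denom.map (algebraMap ℝ ℂ)) := by
    rw [← Polynomial.map_mul]; exact Polynomial.map_dvd _ hd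
  have : ((f.denom.map (algebraMap ℝ ℂ)) * (g.denom.map (algebraMap ℝ ℂ))).IsRoot z :=
    hz.dvd hdvd
  rw [Polynomial.IsRoot, Polynomial.eval_mul] at this
  rcases mul_eq_zero.mp this with h0 | h0
  · exact hf.2 z h0
  · exact hg.2 z h0

lemma StableF.zero {Ω : Set ℂ} : StableF Ω 0 := by
  constructor
  · simp [RatFunc.intDegree_zero]
  · intro z hz
    simp [RatFunc.denom_zero, Polynomial.IsRoot] at hz

lemma StableF.one {Ω : Set ℂ} : StableF Ω 1 := by
  constructor
  · simp [RatFunc.intDegree_one]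
  · intro z hz
    simp [RatFunc.denom_one, Polynomial.IsRoot] at hz

lemma StableF.add {Ω : Set ℂ} {f g : F} (hf : StableF Ω f) (hg : StableF Ω g) :
    StableF Ω (f + g) :=
  stable_of_denom_dvd hf hg (RatFunc.denom_add_dvd f g) (Pr.add hf.1 hg.1)

lemma StableF.mul {Ω : Set ℂ} {f g : F} (hf : StableF Ω f) (hg : StableF Ω g) :
    StableF Ω (f * g) :=
  stable_of_denom_dvd hf hg (RatFunc.denom_mul_dvd f g) (Pr.mul hf.1 hg.1)

lemma StableF.neg {Ω : Set ℂ} {f : F} (hf : StableF Ω f) : StableF Ω (-f) := by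
  have hden1 : ((-1 : F)).denom ∣ 1 := by
    have := RatFunc.denom_div_dvd (K := ℝ) (-1) 1
    simpa using this
  have : -f = (-1 : F) * f := by ring
  rw [this]
  refine stable_of_denom_dvd (f := f) (g := f) hf hf ?_ ?_
  · calc ((-1 : F) * f).denom ∣ ((-1:F).denom * f.denom) := RatFunc.denom_mul_dvd _ _
      _ ∣ 1 * f.denom := mul_dvd_mul_right hden1 _
      _ ∣ f.denom * f.denom := by rw [one_mul]; exact dvd_mul_left _ _
  · rw [← this, RatFunc.intDegree_neg]; exact hf.1

lemma StableF.sub {Ω : Set ℂ} {f g : F} (hf : StableF Ω f) (hg : StableF Ω g) :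
    StableF Ω (f - g) := by
  rw [sub_eq_add_neg]; exact hf.add hg.neg

lemma StableF.sum {Ω : Set ℂ} {n : ℕ} {s : Finset (Fin n)} {f : Fin n → F}
    (h : ∀ i ∈ s, StableF Ω (f i)) : StableF Ω (∑ i ∈ s, f i) := by
  classical
  induction s using Finset.induction_on with
  | empty => simpa using StableF.zero
  | insert _ _ hx ih =>
    rw [Finset.sum_insert hx]
    exact (h _ (Finset.mem_insert_self _ _)).add
      (ih fun i hi => h i (Finset.mem_insert_of_mem hi))

lemma MatStable.add {Ω : Set ℂ} {a b : Type} {A B : Matrix a b F}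
    (hA : MatStable Ω A) (hB : MatStable Ω B) : MatStable Ω (A + B) :=
  fun i j => (hA i j).add (hB i j)

lemma MatStable.sub {Ω : Set ℂ} {a b : Type} {A B : Matrix a b F}
    (hA : MatStable Ω A) (hB : MatStable Ω B) : MatStable Ω (A - B) :=
  fun i j => (hA i j).sub (hB i j)

lemma MatStable.mul {Ω : Set ℂ} {a c : ℕ} {b : ℕ} {A : Matrix (Fin a) (Fin b) F}
    {B : Matrix (Fin b) (Fin c) F}
    (hA : MatStable Ω A) (hB : MatStable Ω B) : MatStable Ω (A * B) := by
  intro i j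
  rw [Matrix.mul_apply]
  exact StableF.sum fun k _ => (hA i k).mul (hB k j)

lemma MatStable.one {Ω : Set ℂ} {a : ℕ} [DecidableEq (Fin a)] :
    MatStable Ω (1 : Matrix (Fin a) (Fin a) F) := by
  intro i j
  rcases eq_or_ne i j with rfl | h
  · simpa using StableF.one (Ω := Ω)
  · simpa [Matrix.one_apply_ne h] using StableF.zero (Ω := Ω)

-- properness subring and strictly-proper ideal
def properR : Subring F where
  carrier := {f | Pr f}
  zero_mem' := by simp [Pr, RatFunc.intDegree_zero]
  one_mem' := by simp [Pr, RatFunc.intDegree_one]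
  add_mem' := Pr.add
  mul_mem' := Pr.mul
  neg_mem' := by
    intro f hf
    simpa [Pr, RatFunc.intDegree_neg] using hf

def spI : Ideal properR where
  carrier := {f | Sp f.1}
  zero_mem' := by simp [Sp]
  add_mem' := Sp.add
  smul_mem' := by
    intro c f hf
    exact Pr.mul_sp c.2 hf

lemma det_one_add_sp {n : ℕ} (A : Matrix (Fin n) (Fin n) F) (h : ∀ i j, Sp (A i j)) :
    IsUnit (1 + A).det := by
  rw [isUnit_iff_ne_zero]
  intro hdet
  set A' : Matrix (Fin n) (Fin n) properR := fun i j =>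
    (⟨A i j, (h i j).pr⟩ : properR) with hA'
  have hmap : (properR.subtype).mapMatrix (1 + A') = 1 + A := by
    ext i j
    rcases eq_or_ne i j with rfl | hij
    · simp only [RingHom.mapMatrix_apply, Matrix.map_apply, Matrix.add_apply, Matrix.one_apply_eq]; simp [hA']
    · simp only [RingHom.mapMatrix_apply, Matrix.map_apply, Matrix.add_apply, Matrix.one_apply_ne hij]; simp [hA']
  have h1 : (properR.subtype) (1 + A').det = 0 := by
    rw [RingHom.map_det, hmap, hdet]
  have h2 : (1 + A').det = 0 := Subtype.ext h1
  have h3 : (Ideal.Quotient.mk spI).mapMatrix (1 + A') = 1 := by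
    have : (Ideal.Quotient.mk spI).mapMatrix A' = 0 := by
      ext i j
      exact Ideal.Quotient.eq_zero_iff_mem.mpr (h i j)
    rw [RingHom.mapMatrix_apply] at this ⊢
    rw [Matrix.map_add _ (fun a b => RingHom.map_add _ a b), this, add_zero]
    exact Matrix.map_one _ (map_zero _) (_root_.map_one _)
  have h4 : (1 : properR ⧸ spI) = 0 := by
    have := RingHom.map_det (Ideal.Quotient.mk spI) (1 + A')
    rw [h3, h2, Matrix.det_one, map_zero] at this
    exact this.symm
  have h5 : (1 : properR) ∈ spI := by
    rwa [← Ideal.Quotient.eq_zero_iff_mem]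
  have : Sp (1 : F) := h5
  rcases this with h | h
  · exact one_ne_zero h
  · rw [RatFunc.intDegree_one] at h; omega

lemma inv_eq_aeval {n : ℕ} (B : Matrix (Fin n) (Fin n) F) (hB : IsUnit B.det) :
    ∃ s : Polynomial F, B⁻¹ = Polynomial.aeval B s := by
  classical
  set χ := B.charpoly with hχ
  have hc : χ.coeff 0 ≠ 0 := by
    intro h0
    have := Matrix.det_eq_sign_charpoly_coeff B
    rw [← hχ, h0, mul_zero] at this
    rw [isUnit_iff_ne_zero] at hB
    exact hB this
  set c := χ.coeff 0 with hc0
  set D := Polynomial.aeval B χ.divX with hD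
  refine ⟨Polynomial.C (-c⁻¹) * χ.divX, ?_⟩
  have hCH : Polynomial.aeval B χ = 0 := B.aeval_self_charpoly
  have hdecomp : Polynomial.X * χ.divX + Polynomial.C c = χ := Polynomial.X_mul_divX_add χ
  have h1 : B * D + algebraMap F (Matrix (Fin n) (Fin n) F) c = 0 := by
    have h := congrArg (Polynomial.aeval B) hdecomp
    rw [hCH, map_add, _root_.map_mul, Polynomial.aeval_X, Polynomial.aeval_C] at h
    exact h
  have hBD : B * D = -(algebraMap F (Matrix (Fin n) (Fin n) F) c) := by
    linear_combination (norm := abel) h1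
  have h2 : B * Polynomial.aeval B (Polynomial.C (-c⁻¹) * χ.divX) = 1 := by
    rw [_root_.map_mul, Polynomial.aeval_C, ← mul_assoc,
      ← Algebra.commutes (-c⁻¹ : F) B, mul_assoc, hBD, mul_neg, ← _root_.map_mul]
    have : ((-c⁻¹ : F)) * c = -1 := by field_simp
    rw [this, map_neg, _root_.map_one (algebraMap F (Matrix (Fin n) (Fin n) F)), neg_neg]
  exact Matrix.inv_eq_right_inv h2

section BlockDiag
variable {n r : ℕ} (ρ : Fin n → Fin r)

def BD (D : Matrix (Fin n) (Fin n) F) : Prop := ∀ i j, ρ i ≠ ρ j → D i j = 0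

lemma BD.one' : BD ρ (1 : Matrix (Fin n) (Fin n) F) := by
  intro i j hij
  exact Matrix.one_apply_ne (fun h => hij (by rw [h]))

lemma BD.mul' {A B : Matrix (Fin n) (Fin n) F} (hA : BD ρ A) (hB : BD ρ B) :
    BD ρ (A * B) := by
  intro i j hij
  rw [Matrix.mul_apply]
  refine Finset.sum_eq_zero fun k _ => ?_
  rcases eq_or_ne (ρ i) (ρ k) with h | h
  · rw [hB k j (h ▸ hij), mul_zero]
  · rw [hA i k h, zero_mul]

lemma BD.pow' {A : Matrix (Fin n) (Fin n) F} (hA : BD ρ A) (k : ℕ) : BD ρ (A ^ k) := by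
  induction k with
  | zero => simpa [pow_zero] using BD.one' ρ
  | succ k ih => rw [pow_succ]; exact BD.mul' ρ ih hA

lemma BD.aeval' {A : Matrix (Fin n) (Fin n) F} (hA : BD ρ A) (s : Polynomial F) :
    BD ρ (Polynomial.aeval A s) := by
  intro i j hij
  rw [Polynomial.aeval_eq_sum_range]
  rw [Matrix.sum_apply]
  refine Finset.sum_eq_zero fun k _ => ?_
  rw [Matrix.smul_apply, hA.pow' ρ k i j hij, smul_zero]

lemma BD.inv' {A : Matrix (Fin n) (Fin n) F} (hA : BD ρ A) (hu : IsUnit A.det) :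
    BD ρ A⁻¹ := by
  obtain ⟨s, hs⟩ := inv_eq_aeval A hu
  rw [hs]
  exact hA.aeval' ρ s

end BlockDiag

section Sparse
variable {m p ru ry : ℕ} (ρu : Fin p → Fin ru) (ρy : Fin m → Fin ry)
  (Kbin : Fin ru → Fin ry → Bool) (G : Matrix (Fin m) (Fin p) F)

def Wp (T : Matrix (Fin p) (Fin m) F) : Prop :=
  ∀ i j, Kbin (ρu i) (ρy j) = false → T i j = 0

lemma Wp.add' {T U : Matrix (Fin p) (Fin m) F} (hT : Wp ρu ρy Kbin T)
    (hU : Wp ρu ρy Kbin U) : Wp ρu ρy Kbin (T + U) := by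
  intro i j hij
  rw [Matrix.add_apply, hT i j hij, hU i j hij, add_zero]

lemma wp_mul_pow
    (hQI : ∀ K : Matrix (Fin p) (Fin m) F,
      (∀ i j, Kbin (ρu i) (ρy j) = false → K i j = 0) →
      (∀ i j, Kbin (ρu i) (ρy j) = false → (K * G * K) i j = 0))
    {T : Matrix (Fin p) (Fin m) F} (hT : Wp ρu ρy Kbin T) :
    ∀ k, Wp ρu ρy Kbin (T * (G * T) ^ k) := by
  intro k
  induction k with
  | zero => simpa [pow_zero] using hT
  | succ k ih =>
    set L := T * (G * T) ^ k with hL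
    have key : T * (G * T) ^ (k + 1) + T * (G * T) ^ (k + 1)
        = (T + L) * G * (T + L) - T * G * T - L * G * L := by
      have e1 : T * (G * T) ^ (k+1) = (T * G) * L := by
        rw [hL, pow_succ']; simp only [← Matrix.mul_assoc]
      have e2 : T * (G * T) ^ (k+1) = (L * G) * T := by
        rw [hL, pow_succ]; simp only [← Matrix.mul_assoc]
      nth_rewrite 1 [e1]
      nth_rewrite 1 [e2]
      simp only [Matrix.add_mul, Matrix.mul_add]
      abel
    intro i j hij
    have h1 := hQI (T + L) (Wp.add' ρu ρy Kbin hT ih) i j hij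
    have h2 := hQI T hT i j hij
    have h3 := hQI L ih i j hij
    have h4 := congrFun (congrFun key i) j
    rw [Matrix.add_apply, Matrix.sub_apply, Matrix.sub_apply, h1, h2, h3] at h4
    have h5 : (2 : F) * (T * (G * T) ^ (k + 1)) i j = 0 := by
      rw [two_mul]; simpa using h4
    rcases mul_eq_zero.mp h5 with h | h
    · norm_num at h
    · exact h

lemma wp_mul_aeval
    (hQI : ∀ K : Matrix (Fin p) (Fin m) F,
      (∀ i j, Kbin (ρu i) (ρy j) = false → K i j = 0) →
      (∀ i j, Kbin (ρu i) (ρy j) = false → (K * G * K) i j = 0))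
    {T : Matrix (Fin p) (Fin m) F} (hT : Wp ρu ρy Kbin T) (s : Polynomial F) :
    Wp ρu ρy Kbin (T * Polynomial.aeval (G * T) s) := by
  intro i j hij
  rw [Polynomial.aeval_eq_sum_range, Matrix.mul_sum]
  rw [Matrix.sum_apply]
  refine Finset.sum_eq_zero fun k _ => ?_
  rw [Matrix.mul_smul, Matrix.smul_apply, wp_mul_pow ρu ρy Kbin G hQI hT k i j hij,
    smul_zero]

lemma wp_mul_inv
    (hQI : ∀ K : Matrix (Fin p) (Fin m) F,
      (∀ i j, Kbin (ρu i) (ρy j) = false → K i j = 0) →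
      (∀ i j, Kbin (ρu i) (ρy j) = false → (K * G * K) i j = 0))
    {T : Matrix (Fin p) (Fin m) F} (hT : Wp ρu ρy Kbin T)
    {B : Matrix (Fin m) (Fin m) F} (hu : IsUnit B.det)
    (q : Polynomial F) (hq : B = Polynomial.aeval (G * T) q) :
    Wp ρu ρy Kbin (T * B⁻¹) := by
  obtain ⟨s, hs⟩ := inv_eq_aeval B hu
  have : B⁻¹ = Polynomial.aeval (G * T) (s.comp q) := by
    rw [Polynomial.aeval_comp, ← hq, hs]
  rw [this]
  exact wp_mul_aeval ρu ρy Kbin G hQI hT (s.comp q)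

end Sparse

lemma Sp.neg {f : F} (hf : Sp f) : Sp (-f) := by
  rcases hf with rfl | hf
  · simp [Sp]
  · right; rwa [RatFunc.intDegree_neg]

section Sparse2
variable {m p ru ry : ℕ} (ρu : Fin p → Fin ru) (ρy : Fin m → Fin ry)
  (Kbin : Fin ru → Fin ry → Bool)

lemma wp_mul_bd {T : Matrix (Fin p) (Fin m) F} (hT : Wp ρu ρy Kbin T)
    {D : Matrix (Fin m) (Fin m) F} (hD : BD ρy D) : Wp ρu ρy Kbin (T * D) := by
  intro i j hij
  rw [Matrix.mul_apply]
  refine Finset.sum_eq_zero fun k _ => ?_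
  rcases eq_or_ne (ρy k) (ρy j) with h | h
  · rw [hT i k (h ▸ hij), zero_mul]
  · rw [hD k j h, mul_zero]

lemma bd_mul_wp {D : Matrix (Fin p) (Fin p) F} (hD : BD ρu D)
    {T : Matrix (Fin p) (Fin m) F} (hT : Wp ρu ρy Kbin T) : Wp ρu ρy Kbin (D * T) := by
  intro i j hij
  rw [Matrix.mul_apply]
  refine Finset.sum_eq_zero fun k _ => ?_
  rcases eq_or_ne (ρu i) (ρu k) with h | h
  · rw [hT k j (h ▸ hij), mul_zero]
  · rw [hD i k h, zero_mul]

end Sparse2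

lemma matSp_mul_left {a b c : ℕ} {A : Matrix (Fin a) (Fin b) F} {B : Matrix (Fin b) (Fin c) F}
    (hA : ∀ i j, (A i j).intDegree ≤ 0) (hB : ∀ i j, Sp (B i j)) :
    ∀ i j, Sp ((A * B) i j) := by
  intro i j
  rw [Matrix.mul_apply]
  exact Sp.sum fun k _ => Pr.mul_sp (hA i k) (hB k j)

lemma matSp_mul_right {a b c : ℕ} {A : Matrix (Fin a) (Fin b) F} {B : Matrix (Fin b) (Fin c) F}
    (hA : ∀ i j, Sp (A i j)) (hB : ∀ i j, (B i j).intDegree ≤ 0) :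
    ∀ i j, Sp ((A * B) i j) := by
  intro i j
  rw [Matrix.mul_apply]
  exact Sp.sum fun k _ => Sp.mul_pr (hA i k) (hB k j)

lemma det_one_sub_sp {n : ℕ} (A : Matrix (Fin n) (Fin n) F) (h : ∀ i j, Sp (A i j)) :
    IsUnit (1 - A).det := by
  have : (1 : Matrix (Fin n) (Fin n) F) - A = 1 + (-A) := by abel
  rw [this]
  exact det_one_add_sp (-A) fun i j => by simpa using (h i j).neg

lemma bezout_ids {m p : ℕ}
    (M : Matrix (Fin p) (Fin p) F) (N : Matrix (Fin m) (Fin p) F)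
    (Mt : Matrix (Fin m) (Fin m) F) (Nt : Matrix (Fin m) (Fin p) F)
    (X : Matrix (Fin p) (Fin m) F) (Y : Matrix (Fin p) (Fin p) F)
    (Xt : Matrix (Fin p) (Fin m) F) (Yt : Matrix (Fin m) (Fin m) F)
    (hbz : Matrix.fromBlocks Y X (-Nt) Mt * Matrix.fromBlocks M (-Xt) N Yt = 1) :
    Y*M + X*N = 1 ∧ Y*Xt = X*Yt ∧ Mt*N = Nt*M ∧ Nt*Xt + Mt*Yt = 1 ∧
    M*Y + Xt*Nt = 1 ∧ M*X = Xt*Mt ∧ N*Y = Yt*Nt ∧ N*X + Yt*Mt = 1 := by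
  have h := hbz
  rw [Matrix.fromBlocks_multiply, ← Matrix.fromBlocks_one] at h
  have hrev := mul_eq_one_comm.mp hbz
  rw [Matrix.fromBlocks_multiply, ← Matrix.fromBlocks_one] at hrev
  have e11 := congrArg Matrix.toBlocks₁₁ h
  have e12 := congrArg Matrix.toBlocks₁₂ h
  have e21 := congrArg Matrix.toBlocks₂₁ h
  have e22 := congrArg Matrix.toBlocks₂₂ h
  have f11 := congrArg Matrix.toBlocks₁₁ hrev
  have f12 := congrArg Matrix.toBlocks₁₂ hrev
  have f21 := congrArg Matrix.toBlocks₂₁ hrev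
  have f22 := congrArg Matrix.toBlocks₂₂ hrev
  simp only [Matrix.toBlocks_fromBlocks₁₁, Matrix.toBlocks_fromBlocks₁₂,
    Matrix.toBlocks_fromBlocks₂₁, Matrix.toBlocks_fromBlocks₂₂,
    Matrix.mul_neg, Matrix.neg_mul, neg_neg] at e11 e12 e21 e22 f11 f12 f21 f22
  refine ⟨e11, ?_, ?_, e22, f11, ?_, ?_, f22⟩
  · linear_combination (norm := abel) -e12
  · linear_combination (norm := abel) e21
  · linear_combination (norm := abel) f12
  · linear_combination (norm := abel) f21

lemma core {Ω : Set ℂ} {m p : ℕ} {G : Matrix (Fin m) (Fin p) F}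
    {M : Matrix (Fin p) (Fin p) F} {N : Matrix (Fin m) (Fin p) F}
    {Mt : Matrix (Fin m) (Fin m) F} {Nt : Matrix (Fin m) (Fin p) F}
    {X : Matrix (Fin p) (Fin m) F} {Y : Matrix (Fin p) (Fin p) F}
    {Xt : Matrix (Fin p) (Fin m) F} {Yt : Matrix (Fin m) (Fin m) F}
    (hGsp : ∀ i j, Sp (G i j))
    (stM : MatStable Ω M) (stN : MatStable Ω N) (stMt : MatStable Ω Mt)
    (stNt : MatStable Ω Nt) (stX : MatStable Ω X) (stY : MatStable Ω Y)
    (stXt : MatStable Ω Xt) (stYt : MatStable Ω Yt)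
    (hMu : IsUnit M.det) (hMtu : IsUnit Mt.det)
    (hN : N = G * M) (hNt : Nt = Mt * G)
    (b1 : Y*M + X*N = 1) (b2 : Y*Xt = X*Yt) (b3 : Mt*N = Nt*M)
    (b4 : Nt*Xt + Mt*Yt = 1) (r2 : M*X = Xt*Mt)
    (Q : Matrix (Fin p) (Fin m) F) (hQ : MatStable Ω Q) :
    IsUnit (Y - Q*Nt).det ∧ IsUnit (Yt - N*Q).det ∧
    Stabilizes Ω G ((Y - Q*Nt)⁻¹ * (X + Q*Mt)) ∧
    (1 + G*((Y - Q*Nt)⁻¹ * (X + Q*Mt)))⁻¹ = (Yt - N*Q)*Mt ∧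
    ((Y - Q*Nt)⁻¹ * (X + Q*Mt)) * ((Yt - N*Q)*Mt) = (Xt + M*Q)*Mt ∧
    (Yt - N*Q)*Mt = 1 - G*((Xt + M*Q)*Mt) ∧
    M*(X + Q*Mt) = (Xt + M*Q)*Mt := by
  have hNsp : ∀ i j, Sp (N i j) := by
    rw [hN]; exact matSp_mul_right hGsp (fun i j => (stM i j).1)
  have hNtsp : ∀ i j, Sp (Nt i j) := by
    rw [hNt]; exact matSp_mul_left (fun i j => (stMt i j).1) hGsp
  have stXQ : MatStable Ω (X + Q*Mt) := stX.add (hQ.mul stMt)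
  have stXtQ : MatStable Ω (Xt + M*Q) := stXt.add (stM.mul hQ)
  have stYQ : MatStable Ω (Y - Q*Nt) := stY.sub (hQ.mul stNt)
  have stYtQ : MatStable Ω (Yt - N*Q) := stYt.sub (stN.mul hQ)
  -- key algebraic identities
  have hα : (Y - Q*Nt)*M = 1 - (X + Q*Mt)*N := by
    have hb3Q : Q*(Nt*M) = Q*(Mt*N) := by rw [b3]
    simp only [Matrix.sub_mul, Matrix.add_mul, Matrix.mul_assoc]
    linear_combination (norm := abel) b1 - hb3Q
  have hdetYQ : IsUnit (Y - Q*Nt).det := by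
    have h1 : IsUnit ((Y - Q*Nt)*M).det := by
      rw [hα]
      exact det_one_sub_sp _ (matSp_mul_left (fun i j => (stXQ i j).1) hNsp)
    rw [Matrix.det_mul] at h1
    exact isUnit_of_mul_isUnit_left h1
  have hβ : Mt*(Yt - N*Q) = 1 - Nt*(Xt + M*Q) := by
    have hb3Q : (Mt*N)*Q = (Nt*M)*Q := by rw [b3]
    simp only [Matrix.mul_assoc] at hb3Q
    simp only [Matrix.mul_sub, Matrix.mul_add, Matrix.mul_assoc]
    linear_combination (norm := abel) b4 - hb3Q
  have hdetYtQ : IsUnit (Yt - N*Q).det := by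
    have h1 : IsUnit (Mt*(Yt - N*Q)).det := by
      rw [hβ]
      exact det_one_sub_sp _ (matSp_mul_right hNtsp (fun i j => (stXtQ i j).1))
    rw [Matrix.det_mul] at h1
    exact isUnit_of_mul_isUnit_right h1
  have hγ : (Y - Q*Nt)*(Xt + M*Q) = (X + Q*Mt)*(Yt - N*Q) := by
    have hYM : Y*(M*Q) = Q - X*(N*Q) := by
      have h := congrArg (fun Z => Z*Q) b1
      simp only [Matrix.add_mul, Matrix.one_mul, Matrix.mul_assoc] at h
      linear_combination (norm := abel) h
    have hNtXt : Q*(Nt*Xt) = Q - Q*(Mt*Yt) := by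
      have h := congrArg (fun Z => Q*Z) b4
      simp only [Matrix.mul_add, Matrix.mul_one] at h
      linear_combination (norm := abel) h
    have hb3Q : Q*(Nt*(M*Q)) = Q*(Mt*(N*Q)) := by
      have h := congrArg (fun Z => Q*(Z*Q)) b3
      simpa only [Matrix.mul_assoc] using h.symm
    simp only [Matrix.sub_mul, Matrix.mul_add, Matrix.add_mul, Matrix.mul_sub,
      Matrix.mul_assoc]
    linear_combination (norm := abel) b2 + hYM - hNtXt - hb3Q
  set K := (Y - Q*Nt)⁻¹ * (X + Q*Mt) with hKdef
  have hK1 : (Y - Q*Nt) * K = X + Q*Mt := by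
    rw [hKdef, ← Matrix.mul_assoc, Matrix.mul_nonsing_inv _ hdetYQ, Matrix.one_mul]
  have hK2 : K * (Yt - N*Q) = Xt + M*Q := by
    rw [hKdef, Matrix.mul_assoc, ← hγ, ← Matrix.mul_assoc,
      Matrix.nonsing_inv_mul _ hdetYQ, Matrix.one_mul]
  have hδ0 : Mt * ((Yt - N*Q) + G*(Xt + M*Q)) = 1 := by
    rw [Matrix.mul_add, hβ, ← Matrix.mul_assoc, ← hNt]
    abel
  have hδ : ((Yt - N*Q) + G*(Xt + M*Q)) * Mt = 1 := mul_eq_one_comm.mp hδ0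
  have hδ' : (Yt - N*Q)*Mt + G*((Xt + M*Q)*Mt) = 1 := by
    have h := hδ
    rw [Matrix.add_mul, Matrix.mul_assoc] at h
    exact h
  have hC5 : (1 + G*K)*((Yt - N*Q)*Mt) = 1 := by
    simp only [Matrix.add_mul, Matrix.one_mul, Matrix.mul_assoc]
    rw [← Matrix.mul_assoc K _ Mt, hK2]
    linear_combination (norm := abel) hδ'
  have hGKinv : (1 + G*K)⁻¹ = (Yt - N*Q)*Mt := Matrix.inv_eq_right_inv hC5
  have hGKu : IsUnit (1 + G*K).det :=
    Matrix.isUnit_det_of_left_inverse (mul_eq_one_comm.mp hC5)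
  have hη : ((Y - Q*Nt) + (X + Q*Mt)*G)*M = 1 := by
    rw [Matrix.add_mul, hα, Matrix.mul_assoc, ← hN]
    abel
  have hη' : M*((Y - Q*Nt) + (X + Q*Mt)*G) = 1 := mul_eq_one_comm.mpr hη
  have hε : (M*(Y - Q*Nt))*(1 + K*G) = 1 := by
    rw [Matrix.mul_add, Matrix.mul_one, Matrix.mul_assoc M (Y - Q*Nt) (K*G),
      ← Matrix.mul_assoc (Y - Q*Nt) K G, hK1]
    rw [Matrix.mul_add] at hη'
    exact hη'
  have hKGinv : (1 + K*G)⁻¹ = M*(Y - Q*Nt) := Matrix.inv_eq_left_inv hε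
  have hC8 : K*((Yt - N*Q)*Mt) = (Xt + M*Q)*Mt := by
    rw [← Matrix.mul_assoc, hK2]
  have hC9 : (Yt - N*Q)*Mt = 1 - G*((Xt + M*Q)*Mt) := by
    linear_combination (norm := abel) hδ'
  have hC11 : M*(X + Q*Mt) = (Xt + M*Q)*Mt := by
    simp only [Matrix.mul_add, Matrix.add_mul, Matrix.mul_assoc]
    linear_combination (norm := abel) r2
  refine ⟨hdetYQ, hdetYtQ, ⟨hGKu, ?_, ?_, ?_, ?_⟩, hGKinv, hC8, hC9, hC11⟩
  · rw [hGKinv]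
    exact stYtQ.mul stMt
  · rw [hGKinv, Matrix.mul_assoc, ← hNt]
    exact stYtQ.mul stNt
  · rw [hGKinv, hC8]
    exact stXtQ.mul stMt
  · rw [hKGinv]
    exact stM.mul stYQ


/-- **Corollary 2 (block-decoupled version of the main result).** For an input/output decoupled
DCF of the strictly proper plant `G` (`M` is `ρu`-block-diagonal, `M̃` is `ρy`-block-diagonal)
and a QI block sparsity subspace `S` given by `Kbin`: if `Q` is stable and
`wp(X̃_Q) ≤ K^bin` or `wp(X_Q) ≤ K^bin` then `K_Q ∈ S` stabilizes `G`; conversely every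
stabilizing controller in `S` is `K_Q` for some stable `Q` satisfying both inequalities. -/
theorem decoupled_main_result (Ω : Set ℂ) (m p ru ry : ℕ)
    (ρu : Fin p → Fin ru) (ρy : Fin m → Fin ry)
    (G : Matrix (Fin m) (Fin p) F) (hG : StrictlyProper G)
    (M : Matrix (Fin p) (Fin p) F) (N : Matrix (Fin m) (Fin p) F)
    (Mt : Matrix (Fin m) (Fin m) F) (Nt : Matrix (Fin m) (Fin p) F)
    (X : Matrix (Fin p) (Fin m) F) (Y : Matrix (Fin p) (Fin p) F)
    (Xt : Matrix (Fin p) (Fin m) F) (Yt : Matrix (Fin m) (Fin m) F)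
    (hDCF : IsDCF Ω G M N Mt Nt X Y Xt Yt)
    (hMdiag : ∀ i j, ρu i ≠ ρu j → M i j = 0)
    (hMtdiag : ∀ i j, ρy i ≠ ρy j → Mt i j = 0)
    (Kbin : Fin ru → Fin ry → Bool)
    (hQI : ∀ K : Matrix (Fin p) (Fin m) F,
      (∀ i j, Kbin (ρu i) (ρy j) = false → K i j = 0) →
      (∀ i j, Kbin (ρu i) (ρy j) = false → (K * G * K) i j = 0)) :
    (∀ Q : Matrix (Fin p) (Fin m) F, MatStable Ω Q →
      ((∀ i j, Kbin (ρu i) (ρy j) = false → (Xt + M * Q) i j = 0) ∨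
       (∀ i j, Kbin (ρu i) (ρy j) = false → (X + Q * Mt) i j = 0)) →
      (∀ i j, Kbin (ρu i) (ρy j) = false →
        ((Y - Q * Nt)⁻¹ * (X + Q * Mt)) i j = 0) ∧
      Stabilizes Ω G ((Y - Q * Nt)⁻¹ * (X + Q * Mt))) ∧
    (∀ K : Matrix (Fin p) (Fin m) F,
      (∀ i j, Kbin (ρu i) (ρy j) = false → K i j = 0) → Stabilizes Ω G K →
      ∃ Q : Matrix (Fin p) (Fin m) F, MatStable Ω Q ∧
        K = (Y - Q * Nt)⁻¹ * (X + Q * Mt) ∧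
        (∀ i j, Kbin (ρu i) (ρy j) = false → (Xt + M * Q) i j = 0) ∧
        (∀ i j, Kbin (ρu i) (ρy j) = false → (X + Q * Mt) i j = 0)) := by
  obtain ⟨b1, b2, b3, b4, r1, r2, r3, r4⟩ := bezout_ids M N Mt Nt X Y Xt Yt hDCF.bezout
  have hMu := hDCF.hM
  have hMtu := hDCF.hMt
  have hN : N = G * M := by
    rw [hDCF.hRight, Matrix.mul_assoc, Matrix.nonsing_inv_mul _ hMu, Matrix.mul_one]
  have hNt : Nt = Mt * G := by
    rw [hDCF.hLeft, ← Matrix.mul_assoc, Matrix.mul_nonsing_inv _ hMtu, Matrix.one_mul]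
  have hGsp : ∀ i j, Sp (G i j) := hG
  have hcore := core hGsp hDCF.stM hDCF.stN hDCF.stMt hDCF.stNt hDCF.stX hDCF.stY
    hDCF.stXt hDCF.stYt hMu hMtu hN hNt b1 b2 b3 b4 r2
  constructor
  · -- sufficiency
    intro Q hQ hwp
    obtain ⟨hC1, hC2, hstab, hGKinv, hC8, hC9, hC11⟩ := hcore Q hQ
    have hWpT : Wp ρu ρy Kbin ((Xt + M*Q)*Mt) := by
      rcases hwp with hw | hw
      · exact wp_mul_bd ρu ρy Kbin hw hMtdiag
      · exact hC11 ▸ bd_mul_wp ρu ρy Kbin hMdiag hw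
    have hBu : IsUnit (1 - G*((Xt + M*Q)*Mt)).det := by
      rw [← hC9, Matrix.det_mul]; exact hC2.mul hMtu
    have hKB : ((Y - Q*Nt)⁻¹*(X + Q*Mt)) * (1 - G*((Xt + M*Q)*Mt)) = (Xt + M*Q)*Mt := by
      rw [← hC9]; exact hC8
    have h7 := congrArg (fun Z => Z * (1 - G*((Xt + M*Q)*Mt))⁻¹) hKB
    simp only [Matrix.mul_assoc] at h7
    rw [Matrix.mul_nonsing_inv _ hBu, Matrix.mul_one] at h7
    have hw2 : Wp ρu ρy Kbin (((Xt + M*Q)*Mt) * (1 - G*((Xt + M*Q)*Mt))⁻¹) := by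
      refine wp_mul_inv ρu ρy Kbin G hQI hWpT hBu (1 - Polynomial.X) ?_
      simp
    simp only [Matrix.mul_assoc] at hw2
    refine ⟨?_, hstab⟩
    intro i j hij
    rw [h7]
    exact hw2 i j hij
  · -- necessity
    intro K hK hstab
    obtain ⟨hGKu, hH1, hH2, hH3, hH4st⟩ := hstab
    have huKG : IsUnit (1 + K*G).det := by
      rw [Matrix.det_one_add_mul_comm K G]; exact hGKu
    have hMtYtGXt : Mt*(Yt + G*Xt) = 1 := by
      rw [Matrix.mul_add, ← Matrix.mul_assoc, ← hNt]
      linear_combination (norm := abel) b4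
    have hYtGXtMt : (Yt + G*Xt)*Mt = 1 := mul_eq_one_comm.mp hMtYtGXt
    have hsub1 : K*((1 + G*K)⁻¹*G) = 1 - (1 + K*G)⁻¹ := by
      have e1 : (1 + K*G)*(K*((1 + G*K)⁻¹*G)) = K*G := by
        calc (1 + K*G)*(K*((1 + G*K)⁻¹*G))
            = ((1 + K*G)*K)*((1 + G*K)⁻¹*G) := by rw [Matrix.mul_assoc]
          _ = (K*(1 + G*K))*((1 + G*K)⁻¹*G) := by
              congr 1
              simp only [Matrix.add_mul, Matrix.mul_add, Matrix.one_mul, Matrix.mul_one,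
                Matrix.mul_assoc]
          _ = K*(((1 + G*K)*(1 + G*K)⁻¹)*G) := by simp only [Matrix.mul_assoc]
          _ = K*G := by rw [Matrix.mul_nonsing_inv _ hGKu, Matrix.one_mul]
      have e2 : (1 + K*G)*(1 - (1 + K*G)⁻¹) = K*G := by
        rw [Matrix.mul_sub, Matrix.mul_one, Matrix.mul_nonsing_inv _ huKG]
        abel
      have e3 := e1.trans e2.symm
      have e4 := congrArg (fun Z => (1 + K*G)⁻¹ * Z) e3
      simp only [← Matrix.mul_assoc, Matrix.nonsing_inv_mul _ huKG, Matrix.one_mul] at e4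
      simpa only [Matrix.mul_assoc] using e4
    set Q := Y*(K*(1 + G*K)⁻¹)*Yt + Y*(1 - (1 + K*G)⁻¹)*Xt
        - X*(1 + G*K)⁻¹*Yt - X*((1 + G*K)⁻¹*G)*Xt with hQdef
    have hQst : MatStable Ω Q :=
      ((((hDCF.stY.mul hH3).mul hDCF.stYt).add
        ((hDCF.stY.mul (MatStable.one.sub hH4st)).mul hDCF.stXt)).sub
        ((hDCF.stX.mul hH1).mul hDCF.stYt)).sub ((hDCF.stX.mul hH2).mul hDCF.stXt)
    have hsub2 : K*((1 + G*K)⁻¹*(G*Xt)) = Xt - (1 + K*G)⁻¹*Xt := by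
      have h := congrArg (fun Z => Z*Xt) hsub1
      simp only [Matrix.mul_assoc, Matrix.sub_mul, Matrix.one_mul] at h
      exact h
    have h6 : Q = ((Y*K - X)*(1 + G*K)⁻¹)*(Yt + G*Xt) := by
      rw [hQdef]
      have hY2 : Y*((1 - (1 + K*G)⁻¹)*Xt) = Y*(K*((1 + G*K)⁻¹*(G*Xt))) := by
        rw [hsub2, Matrix.sub_mul, Matrix.one_mul]
      simp only [Matrix.sub_mul, Matrix.mul_add, Matrix.mul_sub, Matrix.one_mul,
        Matrix.mul_assoc]
      simp only [Matrix.sub_mul, Matrix.mul_sub, Matrix.one_mul, Matrix.mul_assoc] at hY2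
      linear_combination (norm := abel) hY2
    have hMtNtK : Mt + Nt*K = Mt*(1 + G*K) := by
      rw [hNt, Matrix.mul_add, Matrix.mul_one, Matrix.mul_assoc]
    have hQMt : Q*(Mt + Nt*K) = Y*K - X := by
      rw [h6, hMtNtK]
      calc ((Y*K - X)*(1 + G*K)⁻¹)*(Yt + G*Xt) * (Mt*(1 + G*K))
          = (Y*K - X)*((1 + G*K)⁻¹*(((Yt + G*Xt)*Mt)*(1 + G*K))) := by
            simp only [Matrix.mul_assoc]
        _ = (Y*K - X)*((1 + G*K)⁻¹*(1 + G*K)) := by rw [hYtGXtMt, Matrix.one_mul]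
        _ = Y*K - X := by rw [Matrix.nonsing_inv_mul _ hGKu, Matrix.mul_one]
    have hQK : (Y - Q*Nt)*K = X + Q*Mt := by
      have h := hQMt
      simp only [Matrix.mul_add] at h
      simp only [Matrix.sub_mul, Matrix.mul_assoc]
      linear_combination (norm := abel) -h
    obtain ⟨hC1, hC2, hstabQ, hGKinvQ, hC8, hC9, hC11⟩ := hcore Q hQst
    have hKeq : K = (Y - Q*Nt)⁻¹*(X + Q*Mt) := by
      rw [← hQK, ← Matrix.mul_assoc, Matrix.nonsing_inv_mul _ hC1, Matrix.one_mul]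
    have hWpT : Wp ρu ρy Kbin (K*(1 + G*K)⁻¹) := by
      refine wp_mul_inv ρu ρy Kbin G hQI hK hGKu (Polynomial.X + 1) ?_
      simp [add_comm]
    have hTeq : K*(1 + G*K)⁻¹ = (Xt + M*Q)*Mt := by
      rw [hKeq, hGKinvQ]
      exact hC8
    rw [hTeq] at hWpT
    refine ⟨Q, hQst, hKeq, ?_, ?_⟩
    · intro i j hij
      have hXtQ : Xt + M*Q = ((Xt + M*Q)*Mt)*Mt⁻¹ := by
        rw [Matrix.mul_assoc, Matrix.mul_nonsing_inv _ hMtu, Matrix.mul_one]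
      rw [hXtQ]
      exact wp_mul_bd ρu ρy Kbin hWpT (BD.inv' ρy hMtdiag hMtu) i j hij
    · intro i j hij
      have hXQ : X + Q*Mt = M⁻¹*((Xt + M*Q)*Mt) := by
        rw [← hC11, ← Matrix.mul_assoc, Matrix.nonsing_inv_mul _ hMu, Matrix.one_mul]
      rw [hXQ]
      exact bd_mul_wp ρu ρy Kbin (BD.inv' ρu hMdiag hMu) hWpT i j hij
end
end
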